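/- Let λ_j, λ̃ > 0 and κ̃ ≥ 1 be real numbers, and set c = κ̃^{−2}. Then ∫_{r=0}^{∞} ∫_{u=r}^{∞} 4(πλ_j)^2 · r · u · e^{−πλ_j u^2} · e^{−πλ̃ · max(κ̃ r, u)^2} du dr = λ_j^2 c (λ_j − λ̃(c − 2)) / ( (λ_j + λ̃)^2 (λ̃ + λ_j c) ). (This is the closed form in Lemma 1 for Pr(X^{(j,j)}) in the regime κ̃ = (t^{(j̃)}/t^{(j)})^{1/α} ≥ 1, where c = (t^{(j)}/t^{(j̃)})^{2/α}.) -/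

import Mathlib

open MeasureTheory Real Set Filter

lemma my_hasDeriv (b : ℝ) (hb : b ≠ 0) (u : ℝ) :
    HasDerivAt (fun u : ℝ => -Real.exp (-(b*u^2))/(2*b)) (u * Real.exp (-(b*u^2))) u := by
  have h1 : HasDerivAt (fun u : ℝ => -(b*u^2)) (-(b*(2*u))) u := by
    exact (((hasDerivAt_pow 2 u).const_mul b).neg).congr_deriv (by norm_num)
  have h3 := (h1.exp.neg.div_const (2*b))
  refine h3.congr_deriv ?_
  field_simp

lemma my_integrable {b : ℝ} (hb : 0 < b) :
    Integrable (fun u : ℝ => u * Real.exp (-(b*u^2))) := by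
  simpa [neg_mul] using integrable_mul_exp_neg_mul_sq hb

lemma my_tail (b s : ℝ) (hb : 0 < b) :
    ∫ u in Ioi s, u * Real.exp (-(b*u^2)) = Real.exp (-(b*s^2))/(2*b) := by
  have htop : Tendsto (fun u : ℝ => -Real.exp (-(b*u^2))/(2*b)) atTop (nhds 0) := by
    have h1 : Tendsto (fun u : ℝ => b*u^2) atTop atTop :=
      (tendsto_pow_atTop two_ne_zero).const_mul_atTop hb
    have h2 : Tendsto (fun u : ℝ => Real.exp (-(b*u^2))) atTop (nhds 0) :=
      Real.tendsto_exp_atBot.comp (tendsto_neg_atTop_atBot.comp h1)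
    simpa using (h2.neg.div_const (2*b))
  have := integral_Ioi_of_hasDerivAt_of_tendsto
    (f := fun u : ℝ => -Real.exp (-(b*u^2))/(2*b))
    (f' := fun u : ℝ => u * Real.exp (-(b*u^2))) (a := s)
    ((by fun_prop : Continuous (fun u : ℝ => -Real.exp (-(b*u^2))/(2*b))).continuousWithinAt) (fun x _ => my_hasDeriv b hb.ne' x)
    ((my_integrable hb).integrableOn) htop
  rw [this]
  ring

lemma my_interval (b x y : ℝ) (hb : 0 < b) :
    ∫ u in x..y, u * Real.exp (-(b*u^2))
      = (Real.exp (-(b*x^2)) - Real.exp (-(b*y^2)))/(2*b) := by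
  rw [intervalIntegral.integral_eq_sub_of_hasDerivAt
    (fun u _ => my_hasDeriv b hb.ne' u) ((my_integrable hb).intervalIntegrable)]
  ring

/-- Lemma 1 (case j = m, κ̃ = (t^{(j̃)}/t^{(j)})^{1/α} ≥ 1, c = κ̃⁻²): closed
form of Pr(X^{(j,j)}) as an explicit double integral. -/
theorem stmt_3 (lj lt κ c : ℝ) (hlj : 0 < lj) (hlt : 0 < lt) (hκ : 1 ≤ κ)
    (hc : c = κ ^ (-2 : ℤ)) :
    (∫ r in Ioi (0:ℝ), ∫ u in Ioi r,
      4 * (π * lj) ^ 2 * r * u * Real.exp (-(π * lj * u ^ 2)) *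
        Real.exp (-(π * lt * (max (κ * r) u) ^ 2)))
    = lj ^ 2 * c * (lj - lt * (c - 2)) / ((lj + lt) ^ 2 * (lt + lj * c)) := by
  have hκ0 : 0 < κ := lt_of_lt_of_le one_pos hκ
  set a := π * lj with ha
  set b := π * lt with hb
  have hπ := Real.pi_pos
  have ha0 : 0 < a := mul_pos hπ hlj
  have hb0 : 0 < b := mul_pos hπ hlt
  have hs1 : 0 < a + b * κ^2 := by positivity
  have hs2 : 0 < (a + b) * κ^2 := by positivity
  -- closed form of the inner integral
  have inner : ∀ r ∈ Ioi (0:ℝ),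
      (∫ u in Ioi r, 4 * (π * lj) ^ 2 * r * u * Real.exp (-(π * lj * u ^ 2)) *
        Real.exp (-(π * lt * (max (κ * r) u) ^ 2)))
      = (2*a) * (r * Real.exp (-((a + b*κ^2) * r^2)))
        + (2*a^2/(a+b) - 2*a) * (r * Real.exp (-(((a+b)*κ^2) * r^2))) := by
    intro r hr
    rw [mem_Ioi] at hr
    have hrκ : r ≤ κ * r := le_mul_of_one_le_left hr.le hκ
    have hsplit : Ioi r = Ioc r (κ*r) ∪ Ioi (κ*r) := (Ioc_union_Ioi_eq_Ioi hrκ).symm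
    have hcontf : Continuous (fun u : ℝ => 4 * (π * lj) ^ 2 * r * u *
        Real.exp (-(π * lj * u ^ 2)) * Real.exp (-(π * lt * (max (κ * r) u) ^ 2))) := by
      fun_prop
    have hInt1 : IntegrableOn (fun u : ℝ => 4 * (π * lj) ^ 2 * r * u *
        Real.exp (-(π * lj * u ^ 2)) * Real.exp (-(π * lt * (max (κ * r) u) ^ 2)))
        (Ioc r (κ*r)) := hcontf.integrableOn_Ioc
    have heq2 : ∀ u ∈ Ioi (κ*r), 4 * (π * lj) ^ 2 * r * u *
        Real.exp (-(π * lj * u ^ 2)) * Real.exp (-(π * lt * (max (κ * r) u) ^ 2))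
        = (4*a^2*r) * (u * Real.exp (-((a+b) * u^2))) := by
      intro u hu
      rw [mem_Ioi] at hu
      rw [max_eq_right hu.le, ← ha, ← hb, mul_assoc, mul_assoc, ← Real.exp_add]
      ring_nf
    have hInt2 : IntegrableOn (fun u : ℝ => 4 * (π * lj) ^ 2 * r * u *
        Real.exp (-(π * lj * u ^ 2)) * Real.exp (-(π * lt * (max (κ * r) u) ^ 2)))
        (Ioi (κ*r)) := by
      apply IntegrableOn.congr_fun
        (((my_integrable (by positivity : (0:ℝ) < a + b)).const_mul
          (4*a^2*r)).integrableOn) _ measurableSet_Ioi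
      exact fun u hu => (heq2 u hu).symm
    rw [hsplit, setIntegral_union (Ioc_disjoint_Ioi le_rfl) measurableSet_Ioi hInt1 hInt2]
    have e1 : (∫ u in Ioc r (κ*r), 4 * (π * lj) ^ 2 * r * u *
        Real.exp (-(π * lj * u ^ 2)) * Real.exp (-(π * lt * (max (κ * r) u) ^ 2)))
        = (4*a^2*r*Real.exp (-(b*(κ*r)^2))) *
          ((Real.exp (-(a*r^2)) - Real.exp (-(a*(κ*r)^2)))/(2*a)) := by
      rw [← my_interval a r (κ*r) ha0, intervalIntegral.integral_of_le hrκ]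
      rw [← integral_const_mul]
      apply setIntegral_congr_fun measurableSet_Ioc
      intro u hu
      dsimp only
      rw [max_eq_left hu.2, ← ha, ← hb]
      ring
    have e2 : (∫ u in Ioi (κ*r), 4 * (π * lj) ^ 2 * r * u *
        Real.exp (-(π * lj * u ^ 2)) * Real.exp (-(π * lt * (max (κ * r) u) ^ 2)))
        = (4*a^2*r) * (Real.exp (-((a+b)*(κ*r)^2))/(2*(a+b))) := by
      rw [← my_tail (a+b) (κ*r) (by positivity), ← integral_const_mul]
      exact setIntegral_congr_fun measurableSet_Ioi heq2
    rw [e1, e2]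
    have x1 : Real.exp (-(b*(κ*r)^2)) * Real.exp (-(a*r^2))
        = Real.exp (-((a + b*κ^2) * r^2)) := by rw [← Real.exp_add]; congr 1; ring
    have x2 : Real.exp (-(b*(κ*r)^2)) * Real.exp (-(a*(κ*r)^2))
        = Real.exp (-(((a+b)*κ^2) * r^2)) := by rw [← Real.exp_add]; congr 1; ring
    have x3 : Real.exp (-((a+b)*(κ*r)^2)) = Real.exp (-(((a+b)*κ^2) * r^2)) := by
      congr 1; ring
    rw [x3, ← x1, ← x2]
    have hab : a + b ≠ 0 := by positivity
    field_simp
    ring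
  rw [setIntegral_congr_fun measurableSet_Ioi inner]
  have i1 := (my_integrable hs1).integrableOn (s := Ioi (0:ℝ))
  have i2 := (my_integrable hs2).integrableOn (s := Ioi (0:ℝ))
  rw [integral_add ((i1.const_mul _)) ((i2.const_mul _)), integral_const_mul,
    integral_const_mul, my_tail _ 0 hs1, my_tail _ 0 hs2]
  have hc0 : 0 < c := by rw [hc]; positivity
  have hκ2 : κ^2 = c⁻¹ := by
    rw [hc]; rw [zpow_neg, zpow_two]; rw [inv_inv]; ring
  rw [hκ2]
  rw [ha, hb]
  have h1 : lj + lt ≠ 0 := by positivity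
  have h2 : lt + lj * c ≠ 0 := by positivity
  have h3 : π * lj + π * lt * c⁻¹ ≠ 0 := by positivity
  have h4 : (π * lj + π * lt) * c⁻¹ ≠ 0 := by positivity
  norm_num
  field_simp
  ring
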